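/- Let V be a quadratic vector space, C ∈ SO(V) with det(C − I) ≠ 0, and D ∈ o(V) invertible with CD = DC. Set E₁ = (1/2)(C+I)(C−I)⁻¹ − D⁻¹, E₂ = D⁻²((C − C⁻¹)/2 − D), and R = D(I − C⁻¹)⁻¹. Then E₁, E₂ ∈ o(V), R ∈ GL(V), all three commute with C and D, and the block matrix identity ι(C) = [[I,0],[E₁,I]]·[[I,D],[0,I]]·[[I,0],[E₂,I]]·[[R,0],[0,(R⁻¹)ᵗ]] holds, where ι(C) = [[(C+I)/2, C−I],[(C−I)/4, (C+I)/2]]. -/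

import Mathlib

open Module

variable {V : Type*} [AddCommGroup V] [Module ℝ V]

/-- `E₁ = (1/2)(C+I)(C−I)⁻¹ − D⁻¹`. -/
noncomputable def matE₁ (C D : Module.End ℝ V) : Module.End ℝ V :=
  (1 / 2 : ℝ) • ((C + 1) * Ring.inverse (C - 1)) - Ring.inverse D

/-- `E₂ = D⁻²((C − C⁻¹)/2 − D)`. -/
noncomputable def matE₂ (C D : Module.End ℝ V) : Module.End ℝ V :=
  Ring.inverse (D * D) * ((1 / 2 : ℝ) • (C - Ring.inverse C) - D)

/-- `R = D(I − C⁻¹)⁻¹`. -/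
noncomputable def matR (C D : Module.End ℝ V) : Module.End ℝ V :=
  D * Ring.inverse (1 - Ring.inverse C)

private lemma aux_ringInv_eq {A : Type*} [Ring A] {a b : A} (ha : IsUnit a)
    (h : a * b = 1) : Ring.inverse a = b := by
  calc Ring.inverse a = Ring.inverse a * (a * b) := by rw [h, mul_one]
    _ = (Ring.inverse a * a) * b := by rw [mul_assoc]
    _ = b := by rw [Ring.inverse_mul_cancel _ ha, one_mul]

private lemma aux_comm_inv {A : Type*} [Ring A] {x y : A} (hx : IsUnit x)
    (h : y * x = x * y) : y * Ring.inverse x = Ring.inverse x * y := by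
  obtain ⟨u, rfl⟩ := hx
  rw [Ring.inverse_unit]
  exact ((show Commute (↑u) y from h.symm).symm.units_inv_right).eq

private lemma aux_isUnit_of_det_ne_zero {V : Type*} [AddCommGroup V] [Module ℝ V]
    [FiniteDimensional ℝ V] (f : Module.End ℝ V) (hf : LinearMap.det f ≠ 0) : IsUnit f := by
  have h : ((LinearMap.equivOfDetNeZero f hf : V ≃ₗ[ℝ] V) : V →ₗ[ℝ] V) = f :=
    LinearEquiv.coe_ofIsUnitDet _
  rw [Module.End.isUnit_iff, ← h]
  simpa only [LinearEquiv.coe_coe] using (LinearMap.equivOfDetNeZero f hf).bijective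

set_option maxHeartbeats 4000000 in
set_option synthInstance.maxHeartbeats 1000000 in
/-- Factorization of `ι(C) = [[(C+I)/2, C−I],[(C−I)/4, (C+I)/2]]`:  for `C ∈ SO(V)` with
`det(C−I) ≠ 0` and `D ∈ o(V)` invertible commuting with `C`, the elements
`E₁, E₂` are `B`-skew-adjoint, `R` is invertible, all three commute with `C` and `D`, and
`ι(C) = [[I,0],[E₁,I]]·[[I,D],[0,I]]·[[I,0],[E₂,I]]·[[R,0],[0,(R⁻¹)ᵗ]]`,
where `ᵗ` is the `B`-adjoint. -/
theorem iota_factorization [FiniteDimensional ℝ V]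
    (B : LinearMap.BilinForm ℝ V) (hBsym : ∀ x y, B x y = B y x)
    (hB : B.Nondegenerate)
    (t : Module.End ℝ V → Module.End ℝ V)
    (ht : ∀ (T : Module.End ℝ V) (x y : V), B (t T x) y = B x (T y))
    (C D : Module.End ℝ V)
    (hCO : ∀ x y, B (C x) (C y) = B x y) (hCdet : LinearMap.det C = 1)
    (hC1 : LinearMap.det (C - 1) ≠ 0)
    (hDskew : ∀ x y, B (D x) y = - B x (D y)) (hD : IsUnit D)
    (hCD : C * D = D * C) :
    (∀ x y, B (matE₁ C D x) y = - B x (matE₁ C D y)) ∧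
    (∀ x y, B (matE₂ C D x) y = - B x (matE₂ C D y)) ∧
    IsUnit (matR C D) ∧
    (matE₁ C D * C = C * matE₁ C D ∧ matE₁ C D * D = D * matE₁ C D) ∧
    (matE₂ C D * C = C * matE₂ C D ∧ matE₂ C D * D = D * matE₂ C D) ∧
    (matR C D * C = C * matR C D ∧ matR C D * D = D * matR C D) ∧
    (!![(1 / 2 : ℝ) • (C + 1), C - 1; (1 / 4 : ℝ) • (C - 1), (1 / 2 : ℝ) • (C + 1)]
        : Matrix (Fin 2) (Fin 2) (Module.End ℝ V)) =
      !![1, 0; matE₁ C D, 1] * !![1, D; 0, 1] * !![1, 0; matE₂ C D, 1] *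
        !![matR C D, 0; 0, t (Ring.inverse (matR C D))] := by
  classical
  -- abbreviations
  set iC := Ring.inverse C with hiC
  set iU := Ring.inverse (C - 1) with hiU
  set iD := Ring.inverse D with hiD
  set iV := Ring.inverse (1 - iC) with hiV
  set a := algebraMap ℝ (Module.End ℝ V) (1 / 2 : ℝ) with ha
  -- units
  have hCu : IsUnit C := aux_isUnit_of_det_ne_zero C (by rw [hCdet]; norm_num)
  have hUu : IsUnit (C - 1) := aux_isUnit_of_det_ne_zero _ hC1
  have hiCu : IsUnit iC := hiC ▸ hCu.ringInverse
  have hiDu : IsUnit iD := hiD ▸ hD.ringInverse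
  -- basic cancellation
  have rcE : C * iC = 1 := hiC ▸ Ring.mul_inverse_cancel C hCu
  have ruE : (C - 1) * iU = 1 := hiU ▸ Ring.mul_inverse_cancel _ hUu
  have rdE : D * iD = 1 := hiD ▸ Ring.mul_inverse_cancel D hD
  have hVu : IsUnit (1 - iC) := by
    have h1 : (C - 1) * iC = 1 - iC := by rw [sub_mul, rcE, one_mul]
    exact h1 ▸ hUu.mul hiCu
  have hiVu : IsUnit iV := hiV ▸ hVu.ringInverse
  have rvE : (1 - iC) * iV = 1 := hiV ▸ Ring.mul_inverse_cancel _ hVu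
  have raE : a + a = 1 := by rw [ha, ← map_add]; norm_num
  -- commutation of the atoms
  have cA : ∀ X : Module.End ℝ V, a * X = X * a := fun X => by
    rw [ha]; exact Algebra.commutes _ _
  have e1 : C * iC = iC * C := hiC ▸ aux_comm_inv hCu rfl
  have e2 : C * iU = iU * C := hiU ▸ aux_comm_inv hUu (by rw [mul_sub, sub_mul, mul_one, one_mul])
  have e3 : C * D = D * C := hCD
  have e4 : C * iD = iD * C := hiD ▸ aux_comm_inv hD hCD
  have e5 : C * iV = iV * C := hiV ▸ aux_comm_inv hVu (by rw [mul_sub, sub_mul, mul_one, one_mul, e1])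
  have e6 : iC * iU = iU * iC := hiU ▸ aux_comm_inv hUu (by rw [mul_sub, sub_mul, mul_one, one_mul, ← e1])
  have e7 : D * iC = iC * D := hiC ▸ aux_comm_inv hCu hCD.symm
  have e8 : iC * iD = iD * iC := hiD ▸ aux_comm_inv hD e7.symm
  have e9 : iC * iV = iV * iC := hiV ▸ aux_comm_inv hVu (by rw [mul_sub, sub_mul, mul_one, one_mul])
  have e10 : D * iU = iU * D := hiU ▸ aux_comm_inv hUu (by rw [mul_sub, sub_mul, mul_one, one_mul, hCD])
  have e11 : iU * iD = iD * iU := hiD ▸ aux_comm_inv hD e10.symm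
  have e12 : iU * iV = iV * iU := hiV ▸ aux_comm_inv hVu (by rw [mul_sub, sub_mul, mul_one, one_mul, e6])
  have e13 : D * iD = iD * D := hiD ▸ aux_comm_inv hD rfl
  have e14 : D * iV = iV * D := hiV ▸ aux_comm_inv hVu (by rw [mul_sub, sub_mul, mul_one, one_mul, e7])
  have e15 : iD * iV = iV * iD := hiV ▸ aux_comm_inv hVu (by rw [mul_sub, sub_mul, mul_one, one_mul, ← e8])
  have hcomm : ∀ x ∈ ({C, iC, iU, D, iD, iV, a} : Set (Module.End ℝ V)),
      ∀ y ∈ ({C, iC, iU, D, iD, iV, a} : Set (Module.End ℝ V)), x * y = y * x := by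
    intro x hx y hy
    simp only [Set.mem_insert_iff, Set.mem_singleton_iff] at hx hy
    rcases hx with rfl|rfl|rfl|rfl|rfl|rfl|rfl <;> rcases hy with rfl|rfl|rfl|rfl|rfl|rfl|rfl <;>
      first
        | rfl
        | exact cA _
        | exact (cA _).symm
        | exact e1 | exact e1.symm
        | exact e2 | exact e2.symm
        | exact e3 | exact e3.symm
        | exact e4 | exact e4.symm
        | exact e5 | exact e5.symm
        | exact e6 | exact e6.symm
        | exact e7 | exact e7.symm
        | exact e8 | exact e8.symm
        | exact e9 | exact e9.symm
        | exact e10 | exact e10.symm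
        | exact e11 | exact e11.symm
        | exact e12 | exact e12.symm
        | exact e13 | exact e13.symm
        | exact e14 | exact e14.symm
        | exact e15 | exact e15.symm
  -- the commutative subalgebra generated by the atoms
  let S := Algebra.adjoin ℝ ({C, iC, iU, D, iD, iV, a} : Set (Module.End ℝ V))
  letI : CommRing S := Algebra.adjoinCommRingOfComm ℝ hcomm
  let c : S := ⟨C, Algebra.subset_adjoin (by simp)⟩
  let c' : S := ⟨iC, Algebra.subset_adjoin (by simp)⟩
  let u : S := ⟨iU, Algebra.subset_adjoin (by simp)⟩
  let d : S := ⟨D, Algebra.subset_adjoin (by simp)⟩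
  let d' : S := ⟨iD, Algebra.subset_adjoin (by simp)⟩
  let v : S := ⟨iV, Algebra.subset_adjoin (by simp)⟩
  let α : S := ⟨a, Algebra.subset_adjoin (by simp)⟩
  have rc : c * c' = 1 := Subtype.ext (by simpa [c, c'] using rcE)
  have ru : (c - 1) * u = 1 := Subtype.ext (by simpa [c, u] using ruE)
  have rd : d * d' = 1 := Subtype.ext (by simpa [d, d'] using rdE)
  have rv : (1 - c') * v = 1 := Subtype.ext (by simpa [c', v] using rvE)
  have ra : α + α = 1 := Subtype.ext (by simpa [α] using raE)
  -- a transfer helper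
  have transfer : ∀ p q : S, p = q → (p : Module.End ℝ V) = (q : Module.End ℝ V) :=
    fun p q h => congrArg Subtype.val h
  -- closed forms
  have hDD : Ring.inverse (D * D) = iD * iD :=
    aux_ringInv_eq (hD.mul hD) (by rw [mul_assoc, ← mul_assoc D iD iD, rdE, one_mul, rdE])
  have hE₁ : matE₁ C D = a * ((C + 1) * iU) - iD := by
    unfold matE₁; rw [Algebra.smul_def, ← ha, ← hiU, ← hiD]
  have hE₂ : matE₂ C D = iD * iD * (a * (C - iC) - D) := by
    unfold matE₂; rw [hDD, Algebra.smul_def, ← ha, ← hiC]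
  have hR : matR C D = D * iV := by
    unfold matR; rw [← hiC, ← hiV]
  have hRu : IsUnit (matR C D) := hR ▸ hD.mul hiVu
  -- pure algebraic identities, proved in the commutative subalgebra
  have q00E : (1 + D * (iD * iD * (a * (C - iC) - D))) * (D * iV) = a * (C + 1) := by
    refine transfer ((1 + d * (d' * d' * (α * (c - c') - d))) * (d * v)) (α * (c + 1)) ?_
    linear_combination (v*α)*rc + ((-1 : S)*d*v + (-1 : S)*d*d*d'*v + (-1 : S)*c'*v*α + (-1 : S)*c'*d*d'*v*α + c*v*α + c*d*d'*v*α)*rd + (α + c*α)*rv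
  have q01E : D * (iD * (C - 1)) = C - 1 := by
    refine transfer (d * (d' * (c - 1))) (c - 1) ?_
    linear_combination ((-1 : S) + c)*rd
  have q10E : (4 : Module.End ℝ V) *
      (((a * ((C + 1) * iU) - iD) + ((a * ((C + 1) * iU) - iD) * D + 1) *
        (iD * iD * (a * (C - iC) - D))) * (D * iV)) = C - 1 := by
    refine transfer ((4 : S) * (((α * ((c + 1) * u) - d') + ((α * ((c + 1) * u) - d') * d + 1) *
        (d' * d' * (α * (c - c') - d))) * (d * v))) (c - 1) ?_
    linear_combination ((4 : S)*v*α*α + (-4 : S)*u*v*α*α + (-4 : S)*u*d*d*d'*d'*v*α*α)*rc + ((-4 : S)*α*α + (4 : S)*v*α*α + (4 : S)*d*v*α + (8 : S)*d*d*d'*d'*v*α*α + (-4 : S)*d*d*d*d'*d'*v*α + (4 : S)*c*d*d*d'*d'*v*α*α)*ru + ((-4 : S)*v + (8 : S)*v*α*α + (-4 : S)*d*v*α + (8 : S)*d*d'*v*α*α + (-4 : S)*d*d*d'*v*α + (4 : S)*d*d*d'*d'*v + (4 : S)*u*v*α*α + (-8 : S)*u*d*v*α + (4 : S)*u*d*d'*v*α*α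 + (-8 : S)*u*d*d*d'*v*α + (4 : S)*c'*d*d'*d'*v*α + (-4 : S)*c'*u*v*α*α + (-4 : S)*c'*u*d*d'*v*α*α + (4 : S)*c*v*α*α + (4 : S)*c*d*d'*v*α*α + (-4 : S)*c*d*d'*d'*v*α)*rd + ((4 : S)*u*α*α + (4 : S)*c*α*α + (-4 : S)*c*u*α*α)*rv + ((-1 : S) + (-2 : S)*α + (4 : S)*v + (8 : S)*v*α + c + (2 : S)*c*α)*ra
  have q11E : ((a * ((C + 1) * iU) - iD) * D + 1) * (iD * (C - 1)) = a * (C + 1) := by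
    refine transfer (((α * ((c + 1) * u) - d') * d + 1) * (d' * (c - 1))) (α * (c + 1)) ?_
    linear_combination (d*d'*α + c*d*d'*α)*ru + (α + d' + c*α + (-1 : S)*c*d')*rd
  have hw1E : (iC - 1) * (-(C * iU)) = 1 := by
    refine transfer ((c' - 1) * (-(c * u))) 1 ?_
    linear_combination ((-1 : S)*u)*rc + ((1 : S))*ru
  have hT1E : ((-(C * iU)) * (iC + 1)) * a - -iD = -(a * ((C + 1) * iU) - iD) := by
    refine transfer (((-(c * u)) * (c' + 1)) * α - -d') (-(α * ((c + 1) * u) - d')) ?_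
    linear_combination ((-1 : S)*u*α)*rc
  have hT2E : ((iC - C) * a - -D) * (-iD * -iD) = -(iD * iD * (a * (C - iC) - D)) := by
    refine transfer (((c' - c) * α - -d) * (-d' * -d')) (-(d' * d' * (α * (c - c') - d))) ?_
    ring
  have hQE : (D * iV) * ((iC - 1) * (-iD)) = 1 := by
    refine transfer ((d * v) * ((c' - 1) * (-d'))) 1 ?_
    linear_combination (v + (-1 : S)*c'*v)*rd + ((1 : S))*rv
  have cE₁C : (a * ((C + 1) * iU) - iD) * C = C * (a * ((C + 1) * iU) - iD) := by
    exact transfer _ _ (by ring : (α * ((c + 1) * u) - d') * c = c * (α * ((c + 1) * u) - d'))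
  have cE₁D : (a * ((C + 1) * iU) - iD) * D = D * (a * ((C + 1) * iU) - iD) := by
    exact transfer _ _ (by ring : (α * ((c + 1) * u) - d') * d = d * (α * ((c + 1) * u) - d'))
  have cE₂C : (iD * iD * (a * (C - iC) - D)) * C = C * (iD * iD * (a * (C - iC) - D)) := by
    exact transfer _ _
      (by ring : (d' * d' * (α * (c - c') - d)) * c = c * (d' * d' * (α * (c - c') - d)))
  have cE₂D : (iD * iD * (a * (C - iC) - D)) * D = D * (iD * iD * (a * (C - iC) - D)) := by
    exact transfer _ _
      (by ring : (d' * d' * (α * (c - c') - d)) * d = d * (d' * d' * (α * (c - c') - d)))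
  have cRC : (D * iV) * C = C * (D * iV) := by
    exact transfer _ _ (by ring : (d * v) * c = c * (d * v))
  have cRD : (D * iV) * D = D * (D * iV) := by
    exact transfer _ _ (by ring : (d * v) * d = d * (d * v))
  -- more inverse computations
  have hnD : Ring.inverse (-D) = -iD := aux_ringInv_eq hD.neg (by rw [neg_mul_neg, rdE])
  have hiC1u : IsUnit (iC - 1) := by
    have h1 : (1 - C) * iC = iC - 1 := by rw [sub_mul, one_mul, rcE]
    have h2 : IsUnit (1 - C) := (neg_sub C 1) ▸ hUu.neg
    exact h1 ▸ h2.mul hiCu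
  have hw : Ring.inverse (iC - 1) = -(C * iU) := aux_ringInv_eq hiC1u hw1E
  have hQ' : Ring.inverse (matR C D) = (iC - 1) * (-iD) :=
    aux_ringInv_eq hRu (by rw [hR]; exact hQE)
  -- adjoint machinery
  have adjM : ∀ X Y X' Y' : Module.End ℝ V, (∀ x y, B (X x) y = B x (Y y)) →
      (∀ x y, B (X' x) y = B x (Y' y)) → ∀ x y, B ((X * X') x) y = B x ((Y' * Y) y) := by
    intro X Y X' Y' h h' x y
    rw [Module.End.mul_apply, Module.End.mul_apply, h, h']
  have adjSub : ∀ X Y X' Y' : Module.End ℝ V, (∀ x y, B (X x) y = B x (Y y)) →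
      (∀ x y, B (X' x) y = B x (Y' y)) → ∀ x y, B ((X - X') x) y = B x ((Y - Y') y) := by
    intro X Y X' Y' h h' x y
    simp [LinearMap.sub_apply, map_sub, h x y, h' x y]
  have adjAdd : ∀ X Y X' Y' : Module.End ℝ V, (∀ x y, B (X x) y = B x (Y y)) →
      (∀ x y, B (X' x) y = B x (Y' y)) → ∀ x y, B ((X + X') x) y = B x ((Y + Y') y) := by
    intro X Y X' Y' h h' x y
    simp [LinearMap.add_apply, map_add, h x y, h' x y]
  have adjInv : ∀ X Y : Module.End ℝ V, IsUnit X → IsUnit Y → (∀ x y, B (X x) y = B x (Y y)) →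
      ∀ x y, B (Ring.inverse X x) y = B x (Ring.inverse Y y) := by
    intro X Y hX hY h x y
    have h1 : X (Ring.inverse X x) = x := by
      rw [← Module.End.mul_apply, Ring.mul_inverse_cancel _ hX, Module.End.one_apply]
    have h2 : Y (Ring.inverse Y y) = y := by
      rw [← Module.End.mul_apply, Ring.mul_inverse_cancel _ hY, Module.End.one_apply]
    calc B (Ring.inverse X x) y = B (Ring.inverse X x) (Y (Ring.inverse Y y)) := by rw [h2]
      _ = B (X (Ring.inverse X x)) (Ring.inverse Y y) := (h _ _).symm
      _ = B x (Ring.inverse Y y) := by rw [h1]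
  have adjOne : ∀ x y, B ((1 : Module.End ℝ V) x) y = B x ((1 : Module.End ℝ V) y) :=
    fun x y => rfl
  have aC : ∀ x y, B (C x) y = B x (iC y) := by
    intro x y
    have hy : C (iC y) = y := by rw [← Module.End.mul_apply, rcE, Module.End.one_apply]
    calc B (C x) y = B (C x) (C (iC y)) := by rw [hy]
      _ = B x (iC y) := hCO _ _
  have aiC : ∀ x y, B (iC x) y = B x (C y) := by
    intro x y
    have hx2 : C (iC x) = x := by rw [← Module.End.mul_apply, rcE, Module.End.one_apply]
    calc B (iC x) y = B (C (iC x)) (C y) := (hCO _ _).symm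
      _ = B x (C y) := by rw [hx2]
  have aD : ∀ x y, B (D x) y = B x ((-D) y) := by
    intro x y
    rw [LinearMap.neg_apply, map_neg]
    exact hDskew x y
  have aA : ∀ x y, B (a x) y = B x (a y) := by
    intro x y
    rw [ha]
    simp [Module.algebraMap_end_apply, map_smul, LinearMap.smul_apply]
  have aiD : ∀ x y, B (iD x) y = B x ((-iD) y) := by
    have h := adjInv D (-D) hD hD.neg aD
    rw [hnD] at h
    rw [← hiD] at h
    exact h
  -- adjoint of E₁ is -E₁
  have adjE₁ : ∀ x y, B (matE₁ C D x) y =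
      B x (((Ring.inverse (iC - 1) * (iC + 1)) * a - -iD) y) := by
    intro x y
    rw [hE₁]
    exact adjSub _ _ _ _
      (adjM a a ((C + 1) * iU) (Ring.inverse (iC - 1) * (iC + 1)) aA
        (adjM (C + 1) (iC + 1) iU (Ring.inverse (iC - 1))
          (adjAdd C iC (1 : Module.End ℝ V) (1 : Module.End ℝ V) aC adjOne)
          (adjInv (C - 1) (iC - 1) hUu hiC1u
            (adjSub C iC (1 : Module.End ℝ V) (1 : Module.End ℝ V) aC adjOne))))
      aiD x y
  have skewE₁ : ∀ x y, B (matE₁ C D x) y = - B x (matE₁ C D y) := by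
    intro x y
    rw [adjE₁ x y, hw, hT1E, LinearMap.neg_apply, map_neg, hE₁]
  -- adjoint of E₂ is -E₂
  have adjE₂ : ∀ x y, B (matE₂ C D x) y =
      B x ((((iC - C) * a - -D) * (-iD * -iD)) y) := by
    intro x y
    rw [hE₂]
    exact adjM (iD * iD) (-iD * -iD) (a * (C - iC) - D) ((iC - C) * a - -D)
      (adjM iD (-iD) iD (-iD) aiD aiD)
      (adjSub (a * (C - iC)) ((iC - C) * a) D (-D)
        (adjM a a (C - iC) (iC - C) aA (adjSub C iC iC C aC aiC)) aD) x y
  have skewE₂ : ∀ x y, B (matE₂ C D x) y = - B x (matE₂ C D y) := by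
    intro x y
    rw [adjE₂ x y, hT2E, LinearMap.neg_apply, map_neg, hE₂]
  -- the transpose of R⁻¹
  have adjQ : ∀ x y, B ((iD * (C - 1)) x) y = B x (((iC - 1) * (-iD)) y) :=
    adjM iD (-iD) (C - 1) (iC - 1) aiD
      (adjSub C iC (1 : Module.End ℝ V) (1 : Module.End ℝ V) aC adjOne)
  have hS : t (Ring.inverse (matR C D)) = iD * (C - 1) := by
    ext x
    refine sub_eq_zero.mp (hB.1 _ fun y => ?_)
    rw [map_sub, LinearMap.sub_apply, ht, hQ', adjQ x y, sub_self]
  -- the four matrix entries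
  have hq00 : (1 + D * matE₂ C D) * matR C D = (1 / 2 : ℝ) • (C + 1) := by
    rw [hE₂, hR, Algebra.smul_def, ← ha]
    exact q00E
  have hq01 : D * t (Ring.inverse (matR C D)) = C - 1 := by
    rw [hS]; exact q01E
  have hq10 : (matE₁ C D + (matE₁ C D * D + 1) * matE₂ C D) * matR C D
      = (1 / 4 : ℝ) • (C - 1) := by
    have h4 : ((4 : Module.End ℝ V)) = algebraMap ℝ (Module.End ℝ V) (4 : ℝ) :=
      (map_ofNat (algebraMap ℝ (Module.End ℝ V)) 4).symm
    have key : (4 : ℝ) • ((matE₁ C D + (matE₁ C D * D + 1) * matE₂ C D) * matR C D) = C - 1 := by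
      rw [Algebra.smul_def, ← h4, hE₁, hE₂, hR]
      exact q10E
    calc (matE₁ C D + (matE₁ C D * D + 1) * matE₂ C D) * matR C D
        = (1 / 4 : ℝ) • ((4 : ℝ) • ((matE₁ C D + (matE₁ C D * D + 1) * matE₂ C D) * matR C D)) := by
          rw [smul_smul]; norm_num
      _ = (1 / 4 : ℝ) • (C - 1) := by rw [key]
  have hq11 : (matE₁ C D * D + 1) * t (Ring.inverse (matR C D)) = (1 / 2 : ℝ) • (C + 1) := by
    rw [hE₁, hS, Algebra.smul_def, ← ha]
    exact q11E
  refine ⟨skewE₁, skewE₂, hRu, ⟨by rw [hE₁]; exact cE₁C, by rw [hE₁]; exact cE₁D⟩,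
    ⟨by rw [hE₂]; exact cE₂C, by rw [hE₂]; exact cE₂D⟩,
    ⟨by rw [hR]; exact cRC, by rw [hR]; exact cRD⟩, ?_⟩
  rw [Matrix.mul_fin_two, Matrix.mul_fin_two, Matrix.mul_fin_two]
  refine Matrix.ext fun i j => ?_
  fin_cases i <;> fin_cases j <;>
    simp only [Fin.zero_eta, Fin.mk_one, Matrix.cons_val', Matrix.cons_val_zero,
      Matrix.cons_val_one, Matrix.head_cons, Matrix.empty_val', Matrix.cons_val_fin_one,
      Matrix.head_fin_const, Matrix.of_apply, one_mul, mul_one, zero_mul, mul_zero, add_zero,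
      zero_add]
  · exact hq00.symm
  · exact hq01.symm
  · exact hq10.symm
  · exact hq11.symm
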